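/- Let d = d_1 + d_2, K ⊆ ℝ^d an origin-symmetric convex body, and T = T_1 × ℝ^{d_2} with T_1 ⊆ ℝ^{d_1} convex. Let π_1 : ℝ^d → ℝ^{d_1} be the orthogonal projection and define f(s) = γ_{d_2}(K ∩ π_1^{-1}(s)) (the Gaussian fiber measure). If for every z > 0 the sets {s ∈ π_1(K) : f(s) ≥ z} and T_1 satisfy γ_{d_1}(conv(A ∪ T_1))·γ_{d_1}(A ∩ T_1) ≥ γ_{d_1}(A)·γ_{d_1}(T_1) with A = {f ≥ z}, then γ_d(conv(K ∪ T))·γ_d(K ∩ T) ≥ γ_d(K)·γ_d(T). -/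

import Mathlib

open MeasureTheory ProbabilityTheory
open scoped ENNReal

/-- The standard Gaussian probability measure on `ℝ^m`. -/
noncomputable def stdGaussianPi (m : ℕ) : Measure (Fin m → ℝ) :=
  Measure.pi fun _ => gaussianReal 0 1

instance stdGaussianPi.instIsProbabilityMeasure (m : ℕ) :
    IsProbabilityMeasure (stdGaussianPi m) := by
  unfold stdGaussianPi; infer_instance

/-- Absolute continuity is preserved by finite products of measures on `ℝ`. -/
lemma measurePi_absolutelyContinuous :
    ∀ (n : ℕ) (μ ν : Fin n → Measure ℝ), (∀ i, SigmaFinite (μ i)) →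
      (∀ i, SigmaFinite (ν i)) → (∀ i, μ i ≪ ν i) → Measure.pi μ ≪ Measure.pi ν := by
  intro n
  induction n with
  | zero =>
    intro μ ν _ _ _
    rw [Measure.pi_of_empty μ, Measure.pi_of_empty ν]
  | succ n ih =>
    intro μ ν hμ hν h
    haveI := hμ; haveI := hν
    have h1 := measurePreserving_piFinSuccAbove μ 0
    have h2 := measurePreserving_piFinSuccAbove ν 0
    rw [← (h1.symm _).map_eq, ← (h2.symm _).map_eq]
    exact Measure.AbsolutelyContinuous.map
      ((h 0).prod (ih _ _ (fun i => hμ _) (fun i => hν _) fun i => h _))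
      (MeasurableEquiv.measurable _)

/-- The standard Gaussian on `ℝ^m` is absolutely continuous w.r.t. Lebesgue measure. -/
lemma stdGaussianPi_absolutelyContinuous (m : ℕ) :
    stdGaussianPi m ≪ (volume : Measure (Fin m → ℝ)) := by
  unfold stdGaussianPi
  rw [volume_pi]
  exact measurePi_absolutelyContinuous m _ _ (fun _ => inferInstance)
    (fun _ => inferInstance) fun _ => gaussianReal_absolutelyContinuous 0 one_ne_zero

/-- Lifting lemma: let `ℝ^d = ℝ^{d₁} × ℝ^{d₂}`, `K` an origin-symmetric convex body,
`T = T₁ × ℝ^{d₂}` with `T₁` convex, and `f(s) = γ_{d₂}(K ∩ π₁⁻¹(s))`. If for every `z > 0`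
the set `A = {s ∈ π₁(K) : f(s) ≥ z}` together with `T₁` satisfies
`γ_{d₁}(conv(A ∪ T₁))·γ_{d₁}(A ∩ T₁) ≥ γ_{d₁}(A)·γ_{d₁}(T₁)`, then
`γ_d(conv(K ∪ T))·γ_d(K ∩ T) ≥ γ_d(K)·γ_d(T)`. -/
theorem stmt10 (d₁ d₂ : ℕ) (K : Set ((Fin d₁ → ℝ) × (Fin d₂ → ℝ)))
    (hKconv : Convex ℝ K) (hKsymm : K = -K) (hKcomp : IsCompact K)
    (hKint : (interior K).Nonempty)
    (T₁ : Set (Fin d₁ → ℝ)) (hT₁ : Convex ℝ T₁)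
    (H : ∀ z : ℝ≥0∞, 0 < z →
      let A : Set (Fin d₁ → ℝ) :=
        {s | s ∈ Prod.fst '' K ∧ z ≤ stdGaussianPi d₂ {y | (s, y) ∈ K}}
      stdGaussianPi d₁ A * stdGaussianPi d₁ T₁ ≤
        stdGaussianPi d₁ (convexHull ℝ (A ∪ T₁)) * stdGaussianPi d₁ (A ∩ T₁)) :
    ((stdGaussianPi d₁).prod (stdGaussianPi d₂)) K *
        ((stdGaussianPi d₁).prod (stdGaussianPi d₂)) (T₁ ×ˢ Set.univ) ≤
      ((stdGaussianPi d₁).prod (stdGaussianPi d₂)) (convexHull ℝ (K ∪ T₁ ×ˢ Set.univ)) *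
        ((stdGaussianPi d₁).prod (stdGaussianPi d₂)) (K ∩ T₁ ×ˢ Set.univ) := by
  classical
  by_cases hTe : T₁ = ∅
  · subst hTe
    simp [Measure.prod_prod]
  obtain ⟨τ, hτ⟩ := Set.nonempty_iff_ne_empty.2 hTe
  obtain ⟨k₀, hk₀⟩ := hKint
  have hKne : K.Nonempty := ⟨k₀, interior_subset hk₀⟩
  have hK : MeasurableSet K := hKcomp.isClosed.measurableSet
  have hPconv : Convex ℝ (Prod.fst '' K) := by
    simpa using hKconv.linear_image (LinearMap.fst ℝ (Fin d₁ → ℝ) (Fin d₂ → ℝ))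
  have hPne : (Prod.fst '' K).Nonempty := hKne.image _
  set C := convexHull ℝ (Prod.fst '' K ∪ T₁) with hCdef
  have hfrontier : ∀ {s : Set (Fin d₁ → ℝ)}, Convex ℝ s → stdGaussianPi d₁ (frontier s) = 0 :=
    fun {s} hs => stdGaussianPi_absolutelyContinuous d₁ (hs.addHaar_frontier volume)
  -- the fiber function
  set F : (Fin d₁ → ℝ) → ℝ := fun s => (stdGaussianPi d₂ (Prod.mk s ⁻¹' K)).toReal with hFdef
  have hFm : Measurable F := (measurable_measure_prodMk_left hK).ennreal_toReal
  have hfib : ∀ s, stdGaussianPi d₂ (Prod.mk s ⁻¹' K) ≠ ⊤ := fun s => measure_ne_top _ _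
  have hFnn : ∀ s, 0 ≤ F s := fun s => ENNReal.toReal_nonneg
  have hofF : ∀ s, ENNReal.ofReal (F s) = stdGaussianPi d₂ (Prod.mk s ⁻¹' K) := fun s =>
    ENNReal.ofReal_toReal (hfib s)
  have fact2 : ∀ t : ℝ, 0 < t →
      {s | t ≤ F s} =
        {s | s ∈ Prod.fst '' K ∧ ENNReal.ofReal t ≤ stdGaussianPi d₂ {y | (s, y) ∈ K}} := by
    intro t ht
    ext s
    simp only [Set.mem_setOf_eq]
    constructor
    · intro hs
      have hle : ENNReal.ofReal t ≤ stdGaussianPi d₂ (Prod.mk s ⁻¹' K) :=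
        (ENNReal.ofReal_le_iff_le_toReal (hfib s)).2 hs
      have hpos : stdGaussianPi d₂ (Prod.mk s ⁻¹' K) ≠ 0 := by
        intro h0
        rw [h0, nonpos_iff_eq_zero] at hle
        exact absurd hle (ENNReal.ofReal_pos.2 ht).ne'
      obtain ⟨y, hy⟩ := nonempty_of_measure_ne_zero hpos
      exact ⟨⟨(s, y), hy, rfl⟩, hle⟩
    · rintro ⟨-, hle⟩
      exact (ENNReal.ofReal_le_iff_le_toReal (hfib s)).1 hle
  -- a measurable essential core of T₁
  have hSm : MeasurableSet (interior T₁) := isOpen_interior.measurableSet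
  have hTSnull : stdGaussianPi d₁ (T₁ \ interior T₁) = 0 := by
    refine measure_mono_null (fun s hs => ?_) (hfrontier hT₁)
    exact ⟨subset_closure hs.1, hs.2⟩
  -- layer cake for K
  have hγK : ((stdGaussianPi d₁).prod (stdGaussianPi d₂)) K
      = ∫⁻ t in Set.Ioi (0:ℝ), stdGaussianPi d₁ {s | t ≤ F s} := by
    rw [Measure.prod_apply hK,
      ← lintegral_eq_lintegral_meas_le (stdGaussianPi d₁)
        (Filter.Eventually.of_forall hFnn) hFm.aemeasurable]
    exact lintegral_congr fun s => (hofF s).symm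
  -- layer cake for K ∩ (interior T₁) × ℝ^{d₂}
  have hγKS : ((stdGaussianPi d₁).prod (stdGaussianPi d₂)) (K ∩ (interior T₁) ×ˢ Set.univ)
      = ∫⁻ t in Set.Ioi (0:ℝ), stdGaussianPi d₁ ({s | t ≤ F s} ∩ interior T₁) := by
    rw [Measure.prod_apply (hK.inter (hSm.prod MeasurableSet.univ))]
    have h1 : ∀ s, stdGaussianPi d₂ (Prod.mk s ⁻¹' (K ∩ (interior T₁) ×ˢ Set.univ))
        = ENNReal.ofReal ((interior T₁).indicator F s) := by
      intro s
      by_cases hsS : s ∈ interior T₁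
      · have hpre : Prod.mk s ⁻¹' (K ∩ (interior T₁) ×ˢ Set.univ) = Prod.mk s ⁻¹' K := by
          ext y; simp [hsS]
        rw [hpre, Set.indicator_of_mem hsS, hofF]
      · have hpre : Prod.mk s ⁻¹' (K ∩ (interior T₁) ×ˢ Set.univ) = ∅ := by
          ext y; simp [hsS]
        rw [hpre, Set.indicator_of_notMem hsS]
        simp
    rw [lintegral_congr h1,
      lintegral_eq_lintegral_meas_le (stdGaussianPi d₁)
        (Filter.Eventually.of_forall fun s => Set.indicator_nonneg (fun s _ => hFnn s) s)
        ((hFm.indicator hSm).aemeasurable)]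
    refine setLIntegral_congr_fun measurableSet_Ioi
      (fun t ht => ?_)
    congr 1
    ext s
    by_cases hsS : s ∈ interior T₁
    · simp [Set.indicator_of_mem hsS, hsS]
    · simp only [Set.indicator_of_notMem hsS, Set.mem_setOf_eq, Set.mem_inter_iff, hsS,
        and_false, iff_false]
      exact fun hle => absurd ((Set.mem_Ioi.1 ht).trans_le hle) (lt_irrefl 0)
  -- pointwise inequality coming from the hypothesis
  have hmain : ∀ t ∈ Set.Ioi (0:ℝ),
      stdGaussianPi d₁ {s | t ≤ F s} * stdGaussianPi d₁ T₁
        ≤ stdGaussianPi d₁ C * stdGaussianPi d₁ ({s | t ≤ F s} ∩ interior T₁) := by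
    intro t ht
    have hz : (0:ℝ≥0∞) < ENNReal.ofReal t := ENNReal.ofReal_pos.2 ht
    have h := H (ENNReal.ofReal t) hz
    rw [fact2 t ht]
    refine h.trans (mul_le_mul' (measure_mono (convexHull_mono
      (Set.union_subset_union_left _ fun s hs => hs.1))) ?_)
    set A := {s | s ∈ Prod.fst '' K ∧
      ENNReal.ofReal t ≤ stdGaussianPi d₂ {y | (s, y) ∈ K}} with hAdef
    calc stdGaussianPi d₁ (A ∩ T₁)
        ≤ stdGaussianPi d₁ ((A ∩ interior T₁) ∪ (T₁ \ interior T₁)) := by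
          refine measure_mono fun s hs => ?_
          by_cases h' : s ∈ interior T₁
          · exact Or.inl ⟨hs.1, h'⟩
          · exact Or.inr ⟨hs.2, h'⟩
      _ ≤ stdGaussianPi d₁ (A ∩ interior T₁) + stdGaussianPi d₁ (T₁ \ interior T₁) :=
          measure_union_le _ _
      _ = stdGaussianPi d₁ (A ∩ interior T₁) := by rw [hTSnull, add_zero]
  -- Step A
  have stepA : ((stdGaussianPi d₁).prod (stdGaussianPi d₂)) K * stdGaussianPi d₁ T₁
      ≤ stdGaussianPi d₁ C *
        ((stdGaussianPi d₁).prod (stdGaussianPi d₂)) (K ∩ T₁ ×ˢ Set.univ) := by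
    calc ((stdGaussianPi d₁).prod (stdGaussianPi d₂)) K * stdGaussianPi d₁ T₁
        = (∫⁻ t in Set.Ioi (0:ℝ), stdGaussianPi d₁ {s | t ≤ F s}) * stdGaussianPi d₁ T₁ := by
          rw [hγK]
      _ = ∫⁻ t in Set.Ioi (0:ℝ), stdGaussianPi d₁ {s | t ≤ F s} * stdGaussianPi d₁ T₁ :=
          (lintegral_mul_const' _ _ (measure_ne_top _ _)).symm
      _ ≤ ∫⁻ t in Set.Ioi (0:ℝ),
            stdGaussianPi d₁ C * stdGaussianPi d₁ ({s | t ≤ F s} ∩ interior T₁) :=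
          lintegral_mono_ae ((ae_restrict_iff' measurableSet_Ioi).2 (ae_of_all _ hmain))
      _ = stdGaussianPi d₁ C *
            ∫⁻ t in Set.Ioi (0:ℝ), stdGaussianPi d₁ ({s | t ≤ F s} ∩ interior T₁) :=
          lintegral_const_mul' _ _ (measure_ne_top _ _)
      _ = stdGaussianPi d₁ C *
            ((stdGaussianPi d₁).prod (stdGaussianPi d₂)) (K ∩ (interior T₁) ×ˢ Set.univ) := by
          rw [hγKS]
      _ ≤ stdGaussianPi d₁ C *
            ((stdGaussianPi d₁).prod (stdGaussianPi d₂)) (K ∩ T₁ ×ˢ Set.univ) :=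
          mul_le_mul_right (measure_mono (Set.inter_subset_inter_right _
            (Set.prod_mono_left interior_subset))) _
  -- Step B: the convex hull contains a full cylinder over the interior of C
  have hjoin : C = convexJoin ℝ (Prod.fst '' K) T₁ :=
    hPconv.convexHull_union hT₁ hPne ⟨τ, hτ⟩
  have hsubset : (interior C) ×ˢ (Set.univ : Set (Fin d₂ → ℝ))
      ⊆ convexHull ℝ (K ∪ T₁ ×ˢ Set.univ) := by
    rintro ⟨s, w⟩ ⟨hs, -⟩
    have hcont : Filter.Tendsto (fun ε : ℝ => s + ε • (s - τ)) (nhds 0) (nhds s) := by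
      have h1 : Continuous fun ε : ℝ => s + ε • (s - τ) := by fun_prop
      simpa using h1.tendsto 0
    have hev : ∀ᶠ ε in nhds (0:ℝ), s + ε • (s - τ) ∈ interior C :=
      hcont.eventually_mem (isOpen_interior.mem_nhds hs)
    obtain ⟨ε, hεmem, hε⟩ :=
      ((hev.filter_mono (nhdsWithin_le_nhds (s := Set.Ioi (0:ℝ)))).and eventually_mem_nhdsWithin).exists
    have hε0 : (0:ℝ) < ε := hε
    have hεC : s + ε • (s - τ) ∈ convexJoin ℝ (Prod.fst '' K) T₁ := by
      rw [← hjoin]; exact interior_subset hεmem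
    obtain ⟨a, ha, τ', hτ', hseg⟩ := mem_convexJoin.1 hεC
    obtain ⟨u, v, hu, hv, huv, habτ⟩ := hseg
    obtain ⟨p, hpK, hpa⟩ := ha
    have h1ε : (0:ℝ) < 1 + ε := by linarith
    have hvε : (0:ℝ) < v + ε := by linarith
    have hv1 : v ≤ 1 := by linarith
    set lam := (v + ε) / (1 + ε) with hlamdef
    have hlam0 : 0 < lam := div_pos hvε h1ε
    have hlam1 : lam ≤ 1 := by rw [div_le_one h1ε]; linarith
    set t' := (v / (v + ε)) • τ' + (ε / (v + ε)) • τ with ht'def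
    have ht'T : t' ∈ T₁ := hT₁ hτ' hτ (by positivity) (by positivity) (by field_simp)
    have hmem1 : p ∈ K ∪ T₁ ×ˢ Set.univ := Or.inl hpK
    have hmem2 : ((t', lam⁻¹ • (w - (1 - lam) • p.2)) : (Fin d₁ → ℝ) × (Fin d₂ → ℝ))
        ∈ K ∪ T₁ ×ˢ Set.univ := Or.inr ⟨ht'T, trivial⟩
    have hcomb := (convex_convexHull ℝ (K ∪ T₁ ×ˢ Set.univ))
      (subset_convexHull ℝ _ hmem1) (subset_convexHull ℝ _ hmem2)
      (by linarith : (0:ℝ) ≤ 1 - lam) hlam0.le (by ring)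
    have hkey : (1 + ε) • s = u • a + v • τ' + ε • τ := by
      have h2 : u • a + v • τ' + ε • τ = s + ε • (s - τ) + ε • τ := by rw [habτ]
      rw [h2]; module
    have hu' : u = 1 - v := by linarith
    have hs2 : s = ((1 + ε)⁻¹ * u) • a + ((1 + ε)⁻¹ * v) • τ' + ((1 + ε)⁻¹ * ε) • τ := by
      calc s = (1 + ε)⁻¹ • ((1 + ε) • s) := (inv_smul_smul₀ h1ε.ne' s).symm
        _ = _ := by rw [hkey]; module
    have hfst : (1 - lam) • p.1 + lam • t' = s := by
      rw [hpa, hs2, ht'def, hlamdef, hu']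
      match_scalars
      · field_simp; ring
      · field_simp
      · field_simp
    have hsnd : (1 - lam) • p.2 + lam • (lam⁻¹ • (w - (1 - lam) • p.2)) = w := by
      rw [smul_inv_smul₀ hlam0.ne']
      module
    have heq : (1 - lam) • p + lam •
        ((t', lam⁻¹ • (w - (1 - lam) • p.2)) : (Fin d₁ → ℝ) × (Fin d₂ → ℝ)) = (s, w) := by
      refine Prod.ext ?_ ?_ <;>
        simp only [Prod.fst_add, Prod.snd_add, Prod.smul_fst, Prod.smul_snd]
      · exact hfst
      · exact hsnd
    rw [← heq]
    exact hcomb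
  have stepB : stdGaussianPi d₁ C ≤
      ((stdGaussianPi d₁).prod (stdGaussianPi d₂)) (convexHull ℝ (K ∪ T₁ ×ˢ Set.univ)) := by
    have h1 : stdGaussianPi d₁ C ≤ stdGaussianPi d₁ (interior C) := by
      calc stdGaussianPi d₁ C ≤ stdGaussianPi d₁ (interior C ∪ frontier C) :=
            measure_mono (by rw [← closure_eq_interior_union_frontier]; exact subset_closure)
        _ ≤ stdGaussianPi d₁ (interior C) + stdGaussianPi d₁ (frontier C) :=
            measure_union_le _ _
        _ = stdGaussianPi d₁ (interior C) := by
            rw [hfrontier (convex_convexHull ℝ _), add_zero]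
    calc stdGaussianPi d₁ C ≤ stdGaussianPi d₁ (interior C) := h1
      _ = stdGaussianPi d₁ (interior C) * stdGaussianPi d₂ Set.univ := by
          rw [measure_univ, mul_one]
      _ = ((stdGaussianPi d₁).prod (stdGaussianPi d₂)) ((interior C) ×ˢ Set.univ) :=
          (Measure.prod_prod _ _).symm
      _ ≤ _ := measure_mono hsubset
  -- conclusion
  calc ((stdGaussianPi d₁).prod (stdGaussianPi d₂)) K *
        ((stdGaussianPi d₁).prod (stdGaussianPi d₂)) (T₁ ×ˢ Set.univ)
      = ((stdGaussianPi d₁).prod (stdGaussianPi d₂)) K * stdGaussianPi d₁ T₁ := by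
        rw [Measure.prod_prod, measure_univ, mul_one]
    _ ≤ stdGaussianPi d₁ C *
        ((stdGaussianPi d₁).prod (stdGaussianPi d₂)) (K ∩ T₁ ×ˢ Set.univ) := stepA
    _ ≤ ((stdGaussianPi d₁).prod (stdGaussianPi d₂)) (convexHull ℝ (K ∪ T₁ ×ˢ Set.univ)) *
        ((stdGaussianPi d₁).prod (stdGaussianPi d₂)) (K ∩ T₁ ×ˢ Set.univ) :=
        mul_le_mul_left stepB _
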